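/- Fix p > 0, 0 < q ≤ 1, and α > 0. Then for all x ≥ 0: h_{p,q}(x) − (h_{p,q}'(α)/(2α)) x² ≤ h_{p,q}(α) − (α h_{p,q}'(α))/2, where h_{p,q}(x) = log(1 + x^q/p). -/

import Mathlib

open Real Set

private lemma hpq_hasDerivAt (p q c : ℝ) (hp : 0 < p) (x : ℝ) (hx : 0 < x) :
    HasDerivAt (fun y : ℝ => Real.log (1 + y ^ q / p) - c * y ^ 2)
      (q * x ^ (q - 1) / (p + x ^ q) - 2 * c * x) x := by
  have hxq : 0 < x ^ q := Real.rpow_pos_of_pos hx q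
  have hpos : 0 < 1 + x ^ q / p := by positivity
  have h1 : HasDerivAt (fun y : ℝ => y ^ q) (q * x ^ (q - 1)) x :=
    Real.hasDerivAt_rpow_const (Or.inl hx.ne')
  have h2 : HasDerivAt (fun y : ℝ => 1 + y ^ q / p) (q * x ^ (q - 1) / p) x :=
    (h1.div_const p).const_add 1
  have h3 : HasDerivAt (fun y : ℝ => Real.log (1 + y ^ q / p))
      ((q * x ^ (q - 1) / p) / (1 + x ^ q / p)) x := h2.log hpos.ne'
  have h4 : HasDerivAt (fun y : ℝ => c * y ^ 2) (c * (2 * x ^ 1)) x :=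
    (hasDerivAt_pow 2 x).const_mul c
  have := h3.sub h4
  refine HasDerivAt.congr_deriv this ?_
  have hden : p + x ^ q ≠ 0 := by positivity
  have hP : p * (1 + x ^ q / p) = p + x ^ q := by field_simp
  rw [div_div, hP, pow_one]
  ring

/-- quadratic majorization of h_{p,q} at α > 0. -/
theorem hpq_quadratic_majorization (p q α : ℝ)
    (hp : 0 < p) (hq0 : 0 < q) (hq1 : q ≤ 1) (hα : 0 < α) (x : ℝ) (hx : 0 ≤ x) :
    Real.log (1 + x ^ q / p) - (q * α ^ (q - 1) / (p + α ^ q)) / (2 * α) * x ^ 2 ≤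
      Real.log (1 + α ^ q / p) - α * (q * α ^ (q - 1) / (p + α ^ q)) / 2 := by
  set c : ℝ := (q * α ^ (q - 1) / (p + α ^ q)) / (2 * α) with hc
  set f : ℝ → ℝ := fun y => Real.log (1 + y ^ q / p) - c * y ^ 2 with hf
  have hαq : 0 < α ^ q := Real.rpow_pos_of_pos hα q
  have hαden : 0 < p + α ^ q := by positivity
  -- RHS equals f α
  have hRHS : Real.log (1 + α ^ q / p) - α * (q * α ^ (q - 1) / (p + α ^ q)) / 2 = f α := by
    simp only [hf, hc]
    field_simp
  rw [hRHS]
  show f x ≤ f α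
  -- continuity of f on [0, ∞)
  have hcont : ContinuousOn f (Ici 0) := by
    apply ContinuousOn.sub
    · apply ContinuousOn.log
      · apply ContinuousOn.add continuousOn_const
        apply ContinuousOn.div_const
        intro y hy
        exact (Real.continuousAt_rpow_const y q (Or.inr hq0.le)).continuousWithinAt
      · intro y hy
        have : 0 ≤ y ^ q := Real.rpow_nonneg hy q
        positivity
    · exact (continuous_const.mul (continuous_pow 2)).continuousOn
  -- derivative sign helper: for 0 < y, key inequality
  have key : ∀ y : ℝ, 0 < y → y < α → 0 < deriv f y := by
    intro y hy hyα
    rw [(hpq_hasDerivAt p q c hp y hy).deriv]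
    have hyq : 0 < y ^ q := Real.rpow_pos_of_pos hy q
    have hyden : 0 < p + y ^ q := by positivity
    have hratio : (y / α) ^ (2 : ℝ) < (y / α) ^ q :=
      Real.rpow_lt_rpow_of_exponent_gt (by positivity) (by rw [div_lt_one hα]; exact hyα)
        (by linarith)
    have hkey : α ^ q * y ^ 2 < y ^ q * α ^ 2 := by
      have h2 : ((y / α) : ℝ) ^ (2 : ℝ) = y ^ 2 / α ^ 2 := by
        rw [Real.div_rpow hy.le hα.le]
        norm_num [Real.rpow_natCast]
      have hq' : ((y / α) : ℝ) ^ q = y ^ q / α ^ q := Real.div_rpow hy.le hα.le q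
      rw [h2, hq'] at hratio
      have hα2 : (0:ℝ) < α ^ 2 := by positivity
      rw [div_lt_div_iff₀ hα2 hαq] at hratio
      linarith
    have hy1 : y ^ (q - 1) = y ^ q / y := by
      rw [Real.rpow_sub hy, Real.rpow_one]
    have hα1 : α ^ (q - 1) = α ^ q / α := by
      rw [Real.rpow_sub hα, Real.rpow_one]
    rw [hc, hy1, hα1, sub_pos]
    have hL : 2 * (q * (α ^ q / α) / (p + α ^ q) / (2 * α)) * y
        = q * α ^ q * y / ((p + α ^ q) * α ^ 2) := by
      field_simp
    have hR : q * (y ^ q / y) / (p + y ^ q) = q * y ^ q / (y * (p + y ^ q)) := by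
      field_simp
    rw [hL, hR, div_lt_div_iff₀ (by positivity) (by positivity)]
    have hyqle : y ^ q ≤ α ^ q := Real.rpow_le_rpow hy.le hyα.le hq0.le
    nlinarith [mul_lt_mul_of_pos_right hkey hyden, mul_pos hq0 (mul_pos hyq (sub_pos.2 hyα)),
      mul_nonneg (mul_nonneg hq0.le hyq.le) (sub_nonneg.2 hyqle)]
  have key2 : ∀ y : ℝ, α < y → deriv f y < 0 := by
    intro y hyα
    have hy : 0 < y := hα.trans hyα
    rw [(hpq_hasDerivAt p q c hp y hy).deriv]
    have hyq : 0 < y ^ q := Real.rpow_pos_of_pos hy q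
    have hyden : 0 < p + y ^ q := by positivity
    have hratio : (y / α) ^ q < (y / α) ^ (2 : ℝ) :=
      Real.rpow_lt_rpow_of_exponent_lt (by rw [lt_div_iff₀ hα]; linarith) (by linarith)
    have hkey : y ^ q * α ^ 2 < α ^ q * y ^ 2 := by
      have h2 : ((y / α) : ℝ) ^ (2 : ℝ) = y ^ 2 / α ^ 2 := by
        rw [Real.div_rpow hy.le hα.le]
        norm_num [Real.rpow_natCast]
      have hq' : ((y / α) : ℝ) ^ q = y ^ q / α ^ q := Real.div_rpow hy.le hα.le q
      rw [h2, hq'] at hratio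
      have hα2 : (0:ℝ) < α ^ 2 := by positivity
      rw [div_lt_div_iff₀ hαq hα2] at hratio
      linarith
    have hy1 : y ^ (q - 1) = y ^ q / y := by
      rw [Real.rpow_sub hy, Real.rpow_one]
    have hα1 : α ^ (q - 1) = α ^ q / α := by
      rw [Real.rpow_sub hα, Real.rpow_one]
    rw [hc, hy1, hα1, sub_neg]
    have hL : 2 * (q * (α ^ q / α) / (p + α ^ q) / (2 * α)) * y
        = q * α ^ q * y / ((p + α ^ q) * α ^ 2) := by
      field_simp
    have hR : q * (y ^ q / y) / (p + y ^ q) = q * y ^ q / (y * (p + y ^ q)) := by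
      field_simp
    rw [hL, hR, div_lt_div_iff₀ (by positivity) (by positivity)]
    have hyqle : α ^ q ≤ y ^ q := Real.rpow_le_rpow hα.le hyα.le hq0.le
    nlinarith [mul_lt_mul_of_pos_right hkey hαden, mul_pos hq0 (mul_pos hαq (sub_pos.2 hyα)),
      mul_nonneg (mul_nonneg hq0.le hαq.le) (sub_nonneg.2 hyqle)]
  rcases le_or_gt x α with hxα | hxα
  · have hmono : StrictMonoOn f (Icc 0 α) := by
      apply strictMonoOn_of_deriv_pos (convex_Icc 0 α) (hcont.mono Icc_subset_Ici_self)
      intro y hy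
      rw [interior_Icc] at hy
      exact key y hy.1 hy.2
    exact hmono.monotoneOn ⟨hx, hxα⟩ ⟨hα.le, le_rfl⟩ hxα
  · have hanti : StrictAntiOn f (Ici α) := by
      apply strictAntiOn_of_deriv_neg (convex_Ici α)
        (hcont.mono (Ici_subset_Ici.2 hα.le))
      intro y hy
      rw [interior_Ici] at hy
      exact key2 y hy
    exact (hanti.antitoneOn (mem_Ici.2 le_rfl) (le_of_lt hxα) hxα.le : f x ≤ f α)
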